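/- The complex plane wave u(x,t) = exp(i(kx − ωt)) satisfies the two-band homogenized equation ∂ₜ⁴u − (q+d) ∂ₜ⁴∂ₓ²u + dq ∂ₜ⁴∂ₓ⁴u − (−ω_b² dq + pd − nq) ∂ₜ²∂ₓ⁴u + (p − ω_b² q − ω_b² d − n) ∂ₜ²∂ₓ²u + ω_b² ∂ₜ²u − ω_b² n ∂ₓ²u + (ω_b² n q − n p) ∂ₓ⁴u = 0 at every (x,t) if and only if ( ω² (1 + d k²) − n k² ) · ( ω² (1 + q k²) − ω_b² (1 + q k²) + p k² ) = 0; consequently, since 1 + d k² > 0 and 1 + q k² > 0, the plane wave is a solution if and only if ω² = n k² / (1 + d k²) or ω² = ω_b² − p k² / (1 + q k²). -/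
import Mathlib


open MeasureTheory Filter

/-- Partial derivative in the first (space) variable. -/
noncomputable def pdx (u : ℝ → ℝ → ℂ) : ℝ → ℝ → ℂ := fun x t => deriv (fun y => u y t) x

/-- Partial derivative in the second (time) variable. -/
noncomputable def pdt (u : ℝ → ℝ → ℂ) : ℝ → ℝ → ℂ := fun x t => deriv (fun s => u x s) t

lemma wave_pdx (k ω : ℝ) (c : ℂ) :
    pdx (fun x t : ℝ => c * Complex.exp (Complex.I * ((k : ℂ) * x - (ω : ℂ) * t))) =
      fun x t : ℝ => (c * (Complex.I * k)) *
        Complex.exp (Complex.I * ((k : ℂ) * x - (ω : ℂ) * t)) := by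
  funext x t
  have hlin : HasDerivAt (fun z : ℂ => Complex.I * ((k : ℂ) * z - (ω : ℂ) * (t : ℂ)))
      (Complex.I * k) (x : ℂ) := by
    simpa using (((hasDerivAt_id (x : ℂ)).const_mul (k : ℂ)).sub_const
      ((ω : ℂ) * (t : ℂ))).const_mul Complex.I
  have h := ((hlin.cexp.const_mul c).comp_ofReal)
  simpa [pdx, mul_comm, mul_left_comm, mul_assoc] using h.deriv

lemma wave_pdt (k ω : ℝ) (c : ℂ) :
    pdt (fun x t : ℝ => c * Complex.exp (Complex.I * ((k : ℂ) * x - (ω : ℂ) * t))) =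
      fun x t : ℝ => (c * (-(Complex.I * ω))) *
        Complex.exp (Complex.I * ((k : ℂ) * x - (ω : ℂ) * t)) := by
  funext x t
  have hlin : HasDerivAt (fun s : ℂ => Complex.I * ((k : ℂ) * (x : ℂ) - (ω : ℂ) * s))
      (-(Complex.I * ω)) (t : ℂ) := by
    have := (((hasDerivAt_id (t : ℂ)).const_mul (ω : ℂ)).const_sub
      ((k : ℂ) * (x : ℂ))).const_mul Complex.I
    simpa [mul_comm, mul_left_comm] using this
  have h := ((hlin.cexp.const_mul c).comp_ofReal)
  simpa [pdt, mul_comm, mul_left_comm, mul_assoc] using h.deriv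

lemma wave_pdx_iter (k ω : ℝ) (m : ℕ) (c : ℂ) :
    pdx^[m] (fun x t : ℝ => c * Complex.exp (Complex.I * ((k : ℂ) * x - (ω : ℂ) * t))) =
      fun x t : ℝ => (c * (Complex.I * k) ^ m) *
        Complex.exp (Complex.I * ((k : ℂ) * x - (ω : ℂ) * t)) := by
  induction m with
  | zero => simp
  | succ m ih =>
      rw [Function.iterate_succ_apply', ih, wave_pdx]
      funext x t
      ring_nf

lemma wave_pdt_iter (k ω : ℝ) (m : ℕ) (c : ℂ) :
    pdt^[m] (fun x t : ℝ => c * Complex.exp (Complex.I * ((k : ℂ) * x - (ω : ℂ) * t))) =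
      fun x t : ℝ => (c * (-(Complex.I * ω)) ^ m) *
        Complex.exp (Complex.I * ((k : ℂ) * x - (ω : ℂ) * t)) := by
  induction m with
  | zero => simp
  | succ m ih =>
      rw [Function.iterate_succ_apply', ih, wave_pdt]
      funext x t
      ring_nf

/-- The plane wave solves the two-band homogenized equation iff the product of the
(cleared-denominator) acoustic and optical dispersion relations vanishes, and equivalently iff
`ω²` lies on one of the two dispersion branches. -/
theorem stmt_8 (n d p q ωb k ω : ℝ)
    (hn : 0 ≤ n) (hd : 0 ≤ d) (hp : 0 ≤ p) (hq : 0 ≤ q)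
    (u : ℝ → ℝ → ℂ)
    (hu : u = fun (x t : ℝ) => Complex.exp (Complex.I * ((k : ℂ) * (x : ℂ) - (ω : ℂ) * (t : ℂ)))) :
    ((∀ x t : ℝ,
      pdt^[4] u x t - ((q + d : ℝ) : ℂ) * pdt^[4] (pdx^[2] u) x t
        + ((d * q : ℝ) : ℂ) * pdt^[4] (pdx^[4] u) x t
        - ((-ωb ^ 2 * d * q + p * d - n * q : ℝ) : ℂ) * pdt^[2] (pdx^[4] u) x t
        + ((p - ωb ^ 2 * q - ωb ^ 2 * d - n : ℝ) : ℂ) * pdt^[2] (pdx^[2] u) x t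
        + ((ωb ^ 2 : ℝ) : ℂ) * pdt^[2] u x t
        - ((ωb ^ 2 * n : ℝ) : ℂ) * pdx^[2] u x t
        + ((ωb ^ 2 * n * q - n * p : ℝ) : ℂ) * pdx^[4] u x t = 0)
      ↔ (ω ^ 2 * (1 + d * k ^ 2) - n * k ^ 2)
          * (ω ^ 2 * (1 + q * k ^ 2) - ωb ^ 2 * (1 + q * k ^ 2) + p * k ^ 2) = 0)
    ∧ ((∀ x t : ℝ,
      pdt^[4] u x t - ((q + d : ℝ) : ℂ) * pdt^[4] (pdx^[2] u) x t
        + ((d * q : ℝ) : ℂ) * pdt^[4] (pdx^[4] u) x t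
        - ((-ωb ^ 2 * d * q + p * d - n * q : ℝ) : ℂ) * pdt^[2] (pdx^[4] u) x t
        + ((p - ωb ^ 2 * q - ωb ^ 2 * d - n : ℝ) : ℂ) * pdt^[2] (pdx^[2] u) x t
        + ((ωb ^ 2 : ℝ) : ℂ) * pdt^[2] u x t
        - ((ωb ^ 2 * n : ℝ) : ℂ) * pdx^[2] u x t
        + ((ωb ^ 2 * n * q - n * p : ℝ) : ℂ) * pdx^[4] u x t = 0)
      ↔ (ω ^ 2 = n * k ^ 2 / (1 + d * k ^ 2)
          ∨ ω ^ 2 = ωb ^ 2 - p * k ^ 2 / (1 + q * k ^ 2))) := by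
  have hu1 : u = fun x t : ℝ => (1 : ℂ) *
      Complex.exp (Complex.I * ((k : ℂ) * x - (ω : ℂ) * t)) := by
    simp [hu]
  set P : ℝ := (ω ^ 2 * (1 + d * k ^ 2) - n * k ^ 2)
      * (ω ^ 2 * (1 + q * k ^ 2) - ωb ^ 2 * (1 + q * k ^ 2) + p * k ^ 2) with hP
  have key : ∀ x t : ℝ,
      pdt^[4] u x t - ((q + d : ℝ) : ℂ) * pdt^[4] (pdx^[2] u) x t
        + ((d * q : ℝ) : ℂ) * pdt^[4] (pdx^[4] u) x t
        - ((-ωb ^ 2 * d * q + p * d - n * q : ℝ) : ℂ) * pdt^[2] (pdx^[4] u) x t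
        + ((p - ωb ^ 2 * q - ωb ^ 2 * d - n : ℝ) : ℂ) * pdt^[2] (pdx^[2] u) x t
        + ((ωb ^ 2 : ℝ) : ℂ) * pdt^[2] u x t
        - ((ωb ^ 2 * n : ℝ) : ℂ) * pdx^[2] u x t
        + ((ωb ^ 2 * n * q - n * p : ℝ) : ℂ) * pdx^[4] u x t
      = (P : ℂ) * Complex.exp (Complex.I * ((k : ℂ) * x - (ω : ℂ) * t)) := by
    intro x t
    rw [hu1, wave_pdx_iter, wave_pdx_iter, wave_pdt_iter, wave_pdt_iter, wave_pdt_iter,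
      wave_pdt_iter, wave_pdt_iter, wave_pdt_iter]
    have h2k : (Complex.I * k) ^ 2 = -((k : ℂ) ^ 2) := by
      rw [mul_pow, Complex.I_sq]; ring
    have h4k : (Complex.I * k) ^ 4 = ((k : ℂ) ^ 4) := by
      have : (Complex.I * k) ^ 4 = ((Complex.I * k) ^ 2) ^ 2 := by ring
      rw [this, h2k]; ring
    have h2w : (-(Complex.I * ω)) ^ 2 = -((ω : ℂ) ^ 2) := by
      have : (-(Complex.I * ω)) ^ 2 = (Complex.I) ^ 2 * (ω : ℂ) ^ 2 := by ring
      rw [this, Complex.I_sq]; ring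
    have h4w : (-(Complex.I * ω)) ^ 4 = ((ω : ℂ) ^ 4) := by
      have : (-(Complex.I * ω)) ^ 4 = ((-(Complex.I * ω)) ^ 2) ^ 2 := by ring
      rw [this, h2w]; ring
    simp only [h2k, h4k, h2w, h4w, hP]
    push_cast
    ring
  have hexp : ∀ x t : ℝ,
      Complex.exp (Complex.I * ((k : ℂ) * x - (ω : ℂ) * t)) ≠ 0 := fun x t =>
    Complex.exp_ne_zero _
  have h1 : (∀ x t : ℝ,
      pdt^[4] u x t - ((q + d : ℝ) : ℂ) * pdt^[4] (pdx^[2] u) x t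
        + ((d * q : ℝ) : ℂ) * pdt^[4] (pdx^[4] u) x t
        - ((-ωb ^ 2 * d * q + p * d - n * q : ℝ) : ℂ) * pdt^[2] (pdx^[4] u) x t
        + ((p - ωb ^ 2 * q - ωb ^ 2 * d - n : ℝ) : ℂ) * pdt^[2] (pdx^[2] u) x t
        + ((ωb ^ 2 : ℝ) : ℂ) * pdt^[2] u x t
        - ((ωb ^ 2 * n : ℝ) : ℂ) * pdx^[2] u x t
        + ((ωb ^ 2 * n * q - n * p : ℝ) : ℂ) * pdx^[4] u x t = 0) ↔ P = 0 := by
    constructor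
    · intro h
      have h0 := h 0 0
      rw [key 0 0] at h0
      rcases mul_eq_zero.mp h0 with h' | h'
      · exact_mod_cast h'
      · exact absurd h' (hexp 0 0)
    · intro h x t
      rw [key x t, h]
      simp
  have hd' : (0 : ℝ) < 1 + d * k ^ 2 := by positivity
  have hq' : (0 : ℝ) < 1 + q * k ^ 2 := by positivity
  have h2 : P = 0 ↔ (ω ^ 2 = n * k ^ 2 / (1 + d * k ^ 2)
      ∨ ω ^ 2 = ωb ^ 2 - p * k ^ 2 / (1 + q * k ^ 2)) := by
    rw [hP, mul_eq_zero]
    constructor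
    · rintro (h | h)
      · left
        field_simp
        linarith
      · right
        field_simp
        nlinarith [h]
    · rintro (h | h)
      · left
        field_simp at h
        linarith
      · right
        field_simp at h
        nlinarith [h]
  exact ⟨h1, h1.trans h2⟩
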